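/- Let ψ₁, ψ₂ : R → C^{2N} be solutions of J ψᵢ' + Vᵢ ψᵢ = 0 with ψ₁(y) = ψ₂(y) for some y ∈ R. Then for all x ∈ R, |ψ₁(x) - ψ₂(x)| ≤ |ψ₂(y)| · exp(∫_{min(x,y)}^{max(x,y)} (‖V₁(t)‖ + ‖V₂(t)‖) dt) · ∫_{min(x,y)}^{max(x,y)} ‖V₁(s) - V₂(s)‖ ds. -/

import Mathlib

open Matrix MeasureTheory intervalIntegral Set
open scoped NNReal ENNReal

noncomputable section

set_option linter.unusedSectionVars false

/-- The matrix `J = [[0,-I_N],[I_N,0]]` with complex entries. -/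
def Jc (N : ℕ) : Matrix (Fin N ⊕ Fin N) (Fin N ⊕ Fin N) ℂ :=
  Matrix.fromBlocks 0 (-1) 1 0

/-- The operator norm of a complex matrix, acting on the Euclidean space. -/
def opNorm {n : Type*} [Fintype n] [DecidableEq n] (A : Matrix n n ℂ) : ℝ :=
  ‖Matrix.toEuclideanCLM (𝕜 := ℂ) A‖

lemma opNorm_nonneg {n : Type*} [Fintype n] [DecidableEq n] (A : Matrix n n ℂ) :
    0 ≤ opNorm A := by
  rw [opNorm]; exact norm_nonneg _

lemma subst_lemma {a : ℝ → ℝ} (ha : ∀ t, 0 ≤ a t)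
    (hint : ∀ p q : ℝ, IntervalIntegrable a volume p q)
    {g : ℝ → ℝ} (hg : Continuous g) {c b : ℝ} (hcb : c ≤ b) :
    ∫ t in c..b, a t * g (∫ s in c..t, a s) =
      ∫ u in (0:ℝ)..(∫ s in c..b, a s), g u := by
  set A : ℝ → ℝ := fun t => ∫ s in c..t, a s with hA_def
  have hAcont : Continuous A := intervalIntegral.continuous_primitive hint c
  have hAdiff : ∀ p q : ℝ, A q - A p = ∫ s in p..q, a s := by
    intro p q
    have := integral_add_adjacent_intervals (hint c p) (hint p q)
    simp only [hA_def]
    linarith [this]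
  have hAmono : Monotone A := by
    intro p q hpq
    have h1 := hAdiff p q
    have h2 : (0:ℝ) ≤ ∫ s in p..q, a s :=
      intervalIntegral.integral_nonneg hpq (fun u _ => ha u)
    linarith
  have hAc : A c = 0 := intervalIntegral.integral_same
  have hAnonneg : ∀ t, c ≤ t → 0 ≤ A t := fun t ht => hAc ▸ hAmono ht
  set μ' : Measure ℝ := volume.restrict (Ioc c b) with hμ'_def
  have hInt : IntegrableOn a (Ioc c b) volume :=
    (intervalIntegrable_iff_integrableOn_Ioc_of_le hcb).mp (hint c b)
  have ham : AEMeasurable a μ' := hInt.aemeasurable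
  set ab : ℝ → ℝ := fun t => max (ham.mk a t) 0 with hab_def
  have hab_meas : Measurable ab := ham.measurable_mk.max measurable_const
  have hab_nonneg : ∀ t, 0 ≤ ab t := fun t => le_max_right _ _
  have hab_ae : a =ᵐ[μ'] ab := by
    filter_upwards [ham.ae_eq_mk] with t ht
    simp [hab_def, ← ht, ha t]
  have hInt' : Integrable ab μ' := hInt.congr hab_ae
  set f : ℝ → ℝ≥0 := fun t => (ab t).toNNReal with hf_def
  have hf_meas : Measurable f := hab_meas.real_toNNReal
  have hcoe : ∀ t, ((f t : ℝ≥0∞)) = ENNReal.ofReal (ab t) := fun t => rfl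
  set μ : Measure ℝ := μ'.withDensity (fun t => ((f t : ℝ≥0∞))) with hμ_def
  haveI : IsFiniteMeasure μ := by
    rw [hμ_def]
    simp only [hcoe]
    exact isFiniteMeasure_withDensity_ofReal hInt'.hasFiniteIntegral
  haveI : IsFiniteMeasure (μ.map A) := by
    constructor
    rw [Measure.map_apply_of_aemeasurable hAcont.aemeasurable MeasurableSet.univ]
    exact measure_lt_top μ _
  -- the pushforward computation
  have hmap : μ.map A = volume.restrict (Ioc 0 (A b)) := by
    refine Measure.ext_of_Iic _ _ (fun z => ?_)
    rw [Measure.map_apply_of_aemeasurable hAcont.aemeasurable measurableSet_Iic]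
    have hpre : MeasurableSet (A ⁻¹' Iic z) := hAcont.measurable measurableSet_Iic
    have hL : μ (A ⁻¹' Iic z) = ∫⁻ t in (A ⁻¹' Iic z) ∩ Ioc c b, ((f t : ℝ≥0∞)) ∂volume := by
      rw [hμ_def, withDensity_apply _ hpre, hμ'_def, Measure.restrict_restrict hpre]
    have hR : volume.restrict (Ioc 0 (A b)) (Iic z) = ENNReal.ofReal (min (A b) z) := by
      rw [Measure.restrict_apply measurableSet_Iic, Set.inter_comm, Set.Ioc_inter_Iic,
        Real.volume_Ioc, sub_zero]
    rcases lt_or_ge z 0 with hz | hz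
    · have hempty : (A ⁻¹' Iic z) ∩ Ioc c b = ∅ := by
        ext t
        simp only [mem_inter_iff, mem_preimage, mem_Iic, mem_Ioc, mem_empty_iff_false,
          iff_false, not_and, and_imp]
        intro hAt hct htb
        exact absurd hAt (not_le.mpr (lt_of_lt_of_le hz (hAnonneg t hct.le)))
      rw [hL, hempty, hR]
      simp only [Measure.restrict_empty, lintegral_zero_measure]
      symm
      rw [ENNReal.ofReal_eq_zero]
      exact (min_le_right _ _).trans hz.le
    · -- 0 ≤ z
      set S : Set ℝ := Icc c b ∩ A ⁻¹' Iic z with hS_def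
      have hSclosed : IsClosed S := isClosed_Icc.inter (isClosed_Iic.preimage hAcont)
      have hcS : c ∈ S := ⟨left_mem_Icc.mpr hcb, by simp [mem_preimage, hAc, hz]⟩
      have hSbdd : BddAbove S := ⟨b, fun t ht => ht.1.2⟩
      obtain ⟨m, hmS, hmub⟩ : ∃ m, m ∈ S ∧ ∀ t ∈ S, t ≤ m :=
        ⟨sSup S, hSclosed.csSup_mem ⟨c, hcS⟩ hSbdd, fun t ht => le_csSup hSbdd ht⟩
      have hcm : c ≤ m := hmub c hcS
      have hmb : m ≤ b := hmS.1.2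
      have hAmz : A m ≤ z := hmS.2
      have hset : (A ⁻¹' Iic z) ∩ Ioc c b = Ioc c m := by
        ext t
        simp only [mem_inter_iff, mem_preimage, mem_Iic, mem_Ioc]
        constructor
        · rintro ⟨hAt, hct, htb⟩
          exact ⟨hct, hmub t ⟨⟨hct.le, htb⟩, hAt⟩⟩
        · rintro ⟨hct, htm⟩
          exact ⟨(hAmono htm).trans hAmz, hct, htm.trans hmb⟩
      have hAmval : A m = min (A b) z := by
        rcases eq_or_lt_of_le hmb with rfl | hmb'
        · exact (min_eq_left hAmz).symm
        · have hAmz' : A m = z := by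
            by_contra hne
            have hlt : A m < z := lt_of_le_of_ne hAmz hne
            have hev : ∀ᶠ t in nhdsWithin m (Ioi m), A t < z :=
              ((hAcont.tendsto m).eventually_lt_const hlt).filter_mono nhdsWithin_le_nhds
            have hev2 : Ioo m b ∈ nhdsWithin m (Ioi m) := Ioo_mem_nhdsGT hmb'
            obtain ⟨t, htz, htmem⟩ := (hev.and hev2).exists
            have : t ∈ S := ⟨⟨hcm.trans htmem.1.le, htmem.2.le⟩, htz.le⟩
            exact absurd (hmub t this) (not_le.mpr htmem.1)
          rw [hAmz', min_eq_right (hAmz' ▸ hAmono hmb)]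
      rw [hL, hset, hR, ← hAmval]
      have hsub : IntegrableOn a (Ioc c m) volume := hInt.mono_set (Ioc_subset_Ioc_right hmb)
      have hcongr : ∫⁻ t in Ioc c m, ((f t : ℝ≥0∞)) ∂volume
          = ∫⁻ t in Ioc c m, ENNReal.ofReal (a t) ∂volume := by
        apply lintegral_congr_ae
        have := ae_restrict_of_ae_restrict_of_subset (Ioc_subset_Ioc_right hmb)
          (hab_ae : a =ᶠ[ae μ'] ab)
        filter_upwards [this] with t ht
        simp [hf_def, ENNReal.ofReal, ht]
      rw [hcongr, ← ofReal_integral_eq_lintegral_ofReal hsub (ae_of_all _ (fun t => ha t))]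
      congr 1
      have : A m = ∫ s in c..m, a s := by rw [← hAdiff c m, hAc, sub_zero]
      rw [this, intervalIntegral.integral_of_le hcm]
  -- final computation using the pushforward
  have hAb0 : 0 ≤ A b := hAnonneg b hcb
  calc ∫ t in c..b, a t * g (A t)
      = ∫ t, a t * g (A t) ∂μ' := by
        rw [hμ'_def, intervalIntegral.integral_of_le hcb]
    _ = ∫ t, f t • g (A t) ∂μ' := by
        apply MeasureTheory.integral_congr_ae
        filter_upwards [hab_ae] with t ht
        simp [hf_def, NNReal.smul_def, Real.coe_toNNReal _ (hab_nonneg t), ht]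
    _ = ∫ x, g (A x) ∂μ := (integral_withDensity_eq_integral_smul hf_meas _).symm
    _ = ∫ u, g u ∂(μ.map A) := (integral_map hAcont.aemeasurable hg.aestronglyMeasurable).symm
    _ = ∫ u in Ioc 0 (A b), g u := by rw [hmap]
    _ = ∫ u in (0:ℝ)..(A b), g u := (intervalIntegral.integral_of_le hAb0).symm


lemma exp_identity {a : ℝ → ℝ} (ha : ∀ t, 0 ≤ a t)
    (hint : ∀ p q : ℝ, IntervalIntegrable a volume p q) {c b : ℝ} (hcb : c ≤ b) :
    ∫ t in c..b, a t * Real.exp (∫ s in c..t, a s)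
      = Real.exp (∫ s in c..b, a s) - 1 := by
  rw [subst_lemma ha hint Real.continuous_exp hcb, integral_exp, Real.exp_zero]

lemma exp_identity' {a : ℝ → ℝ} (ha : ∀ t, 0 ≤ a t)
    (hint : ∀ p q : ℝ, IntervalIntegrable a volume p q) {c b : ℝ} (hcb : c ≤ b) :
    ∫ t in c..b, a t * Real.exp (∫ s in t..b, a s)
      = Real.exp (∫ s in c..b, a s) - 1 := by
  have hsplit : ∀ t : ℝ, (∫ s in t..b, a s) = (∫ s in c..b, a s) - ∫ s in c..t, a s := by
    intro t
    have := integral_add_adjacent_intervals (hint c t) (hint t b)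
    linarith
  have h1 : ∫ t in c..b, a t * Real.exp (∫ s in t..b, a s)
      = ∫ t in c..b, a t * Real.exp ((∫ s in c..b, a s) - (∫ s in c..t, a s)) := by
    apply intervalIntegral.integral_congr
    intro t _
    simp only
    rw [hsplit t]
  have h2 := subst_lemma ha hint
    (g := fun u => Real.exp ((∫ s in c..b, a s) - u))
    (Real.continuous_exp.comp (continuous_const.sub continuous_id)) hcb
  beta_reduce at h2
  rw [h1, h2,
    intervalIntegral.integral_comp_sub_left (fun u => Real.exp u) (∫ s in c..b, a s)]
  simp [integral_exp]

/-- Grönwall's inequality, forward form, with integrable coefficient. -/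
lemma gronwall_fwd {a u : ℝ → ℝ} {B y b : ℝ} (hyb : y ≤ b) (ha : ∀ t, 0 ≤ a t)
    (haint : ∀ p q : ℝ, IntervalIntegrable a volume p q)
    (hu : ContinuousOn u (Icc y b))
    (h : ∀ t ∈ Icc y b, u t ≤ B + ∫ s in y..t, a s * u s) :
    u b ≤ B * Real.exp (∫ s in y..b, a s) := by
  set A : ℝ → ℝ := fun t => ∫ s in y..t, a s with hA_def
  have hAcont : Continuous A := intervalIntegral.continuous_primitive haint y
  have hFcont : ContinuousOn (fun t => u t * Real.exp (-A t)) (Icc y b) :=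
    hu.mul (Real.continuous_exp.comp hAcont.neg).continuousOn
  obtain ⟨t₀, ht₀, hmax⟩ := isCompact_Icc.exists_isMaxOn (nonempty_Icc.mpr hyb) hFcont
  set C : ℝ := u t₀ * Real.exp (-A t₀) with hC_def
  have hCt : ∀ t ∈ Icc y b, u t ≤ C * Real.exp (A t) := by
    intro t ht
    have h1 : u t * Real.exp (-A t) ≤ C := hmax ht
    have h2 := mul_le_mul_of_nonneg_right h1 (Real.exp_pos (A t)).le
    rwa [mul_assoc, ← Real.exp_add, neg_add_cancel, Real.exp_zero, mul_one] at h2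
  have ht₀y : y ≤ t₀ := ht₀.1
  have hint1 : IntervalIntegrable (fun s => a s * u s) volume y t₀ :=
    (haint y t₀).mul_continuousOn (by
      rw [uIcc_of_le ht₀y]
      exact hu.mono (Icc_subset_Icc le_rfl ht₀.2))
  have hint2 : IntervalIntegrable (fun s => a s * (C * Real.exp (A s))) volume y t₀ :=
    (haint y t₀).mul_continuousOn
      (continuous_const.mul (Real.continuous_exp.comp hAcont)).continuousOn
  have hmono : (∫ s in y..t₀, a s * u s) ≤ ∫ s in y..t₀, a s * (C * Real.exp (A s)) := by
    apply intervalIntegral.integral_mono_on ht₀y hint1 hint2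
    intro s hs
    exact mul_le_mul_of_nonneg_left
      (hCt s ⟨hs.1, hs.2.trans ht₀.2⟩) (ha s)
  have hcalc : (∫ s in y..t₀, a s * (C * Real.exp (A s))) = C * (Real.exp (A t₀) - 1) := by
    have h1 : (∫ s in y..t₀, a s * (C * Real.exp (A s)))
        = C * ∫ s in y..t₀, a s * Real.exp (A s) := by
      rw [← intervalIntegral.integral_const_mul]
      apply intervalIntegral.integral_congr
      intro s _
      ring
    rw [h1, exp_identity ha haint ht₀y]
  have hut₀ : u t₀ = C * Real.exp (A t₀) := by
    rw [hC_def, mul_assoc, ← Real.exp_add, neg_add_cancel, Real.exp_zero, mul_one]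
  have hCB : C ≤ B := by
    have := h t₀ ht₀
    rw [hut₀] at this
    have h2 := this.trans (by linarith [hmono.trans (le_of_eq hcalc)] : B + (∫ s in y..t₀, a s * u s) ≤ B + C * (Real.exp (A t₀) - 1))
    nlinarith [Real.exp_pos (A t₀)]
  calc u b ≤ C * Real.exp (A b) := hCt b (right_mem_Icc.mpr hyb)
    _ ≤ B * Real.exp (A b) := mul_le_mul_of_nonneg_right hCB (Real.exp_pos _).le

/-- Grönwall's inequality, backward form. -/
lemma gronwall_bwd {a u : ℝ → ℝ} {B y b : ℝ} (hby : b ≤ y) (ha : ∀ t, 0 ≤ a t)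
    (haint : ∀ p q : ℝ, IntervalIntegrable a volume p q)
    (hu : ContinuousOn u (Icc b y))
    (h : ∀ t ∈ Icc b y, u t ≤ B + ∫ s in t..y, a s * u s) :
    u b ≤ B * Real.exp (∫ s in b..y, a s) := by
  set K : ℝ → ℝ := fun t => ∫ s in t..y, a s with hK_def
  have hKcont : Continuous K := by
    have h1 : Continuous (fun t => ∫ s in y..t, a s) :=
      intervalIntegral.continuous_primitive haint y
    have h2 : K = fun t => -∫ s in y..t, a s := by
      funext t
      rw [hK_def]
      simp [intervalIntegral.integral_symm y t]
    rw [h2]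
    exact h1.neg
  have hFcont : ContinuousOn (fun t => u t * Real.exp (-K t)) (Icc b y) :=
    hu.mul (Real.continuous_exp.comp hKcont.neg).continuousOn
  obtain ⟨t₀, ht₀, hmax⟩ := isCompact_Icc.exists_isMaxOn (nonempty_Icc.mpr hby) hFcont
  set C : ℝ := u t₀ * Real.exp (-K t₀) with hC_def
  have hCt : ∀ t ∈ Icc b y, u t ≤ C * Real.exp (K t) := by
    intro t ht
    have h1 : u t * Real.exp (-K t) ≤ C := hmax ht
    have h2 := mul_le_mul_of_nonneg_right h1 (Real.exp_pos (K t)).le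
    rwa [mul_assoc, ← Real.exp_add, neg_add_cancel, Real.exp_zero, mul_one] at h2
  have ht₀y : t₀ ≤ y := ht₀.2
  have hint1 : IntervalIntegrable (fun s => a s * u s) volume t₀ y :=
    (haint t₀ y).mul_continuousOn (by
      rw [uIcc_of_le ht₀y]
      exact hu.mono (Icc_subset_Icc ht₀.1 le_rfl))
  have hint2 : IntervalIntegrable (fun s => a s * (C * Real.exp (K s))) volume t₀ y :=
    (haint t₀ y).mul_continuousOn
      (continuous_const.mul (Real.continuous_exp.comp hKcont)).continuousOn
  have hmono : (∫ s in t₀..y, a s * u s) ≤ ∫ s in t₀..y, a s * (C * Real.exp (K s)) := by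
    apply intervalIntegral.integral_mono_on ht₀y hint1 hint2
    intro s hs
    exact mul_le_mul_of_nonneg_left (hCt s ⟨ht₀.1.trans hs.1, hs.2⟩) (ha s)
  have hcalc : (∫ s in t₀..y, a s * (C * Real.exp (K s))) = C * (Real.exp (K t₀) - 1) := by
    have h1 : (∫ s in t₀..y, a s * (C * Real.exp (K s)))
        = C * ∫ s in t₀..y, a s * Real.exp (K s) := by
      rw [← intervalIntegral.integral_const_mul]
      apply intervalIntegral.integral_congr
      intro s _
      ring
    rw [h1, exp_identity' ha haint ht₀y]
  have hut₀ : u t₀ = C * Real.exp (K t₀) := by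
    rw [hC_def, mul_assoc, ← Real.exp_add, neg_add_cancel, Real.exp_zero, mul_one]
  have hCB : C ≤ B := by
    have := h t₀ ht₀
    rw [hut₀] at this
    have h2 := this.trans (by linarith [hmono.trans (le_of_eq hcalc)] : B + (∫ s in t₀..y, a s * u s) ≤ B + C * (Real.exp (K t₀) - 1))
    nlinarith [Real.exp_pos (K t₀)]
  calc u b ≤ C * Real.exp (K b) := hCt b (left_mem_Icc.mpr hby)
    _ ≤ B * Real.exp (K b) := mul_le_mul_of_nonneg_right hCB (Real.exp_pos _).le

variable {n : Type*} [Fintype n] [DecidableEq n]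

/-- norm of a vector as element of Euclidean space -/
def nrm (v : n → ℂ) : ℝ := ‖(WithLp.equiv 2 (n → ℂ)).symm v‖

lemma nrm_eq_sqrt (v : n → ℂ) : nrm v = Real.sqrt (∑ i, ‖v i‖ ^ 2) := by
  rw [nrm, EuclideanSpace.norm_eq]
  rfl

lemma nrm_nonneg (v : n → ℂ) : 0 ≤ nrm v := norm_nonneg _

lemma nrm_mulVec_le (M : Matrix n n ℂ) (v : n → ℂ) :
    nrm (M.mulVec v) ≤ opNorm M * nrm v := by
  have h := (Matrix.toEuclideanCLM (𝕜 := ℂ) M).le_opNorm ((WithLp.equiv 2 (n → ℂ)).symm v)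
  rwa [WithLp.equiv_symm_apply, Matrix.toEuclideanCLM_toLp] at h

lemma nrm_add_le (v w : n → ℂ) : nrm (v + w) ≤ nrm v + nrm w := by
  rw [nrm, nrm, nrm]
  exact norm_add_le _ _

lemma nrm_neg (v : n → ℂ) : nrm (-v) = nrm v := by
  rw [nrm, nrm]
  exact norm_neg _

lemma nrm_J (N : ℕ) (v : (Fin N ⊕ Fin N) → ℂ) : nrm ((Jc N).mulVec v) = nrm v := by
  rw [nrm_eq_sqrt, nrm_eq_sqrt]
  congr 1
  rw [Fintype.sum_sum_type, Fintype.sum_sum_type]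
  simp only [Jc, Matrix.fromBlocks_mulVec, Sum.elim_inl, Sum.elim_inr,
    Matrix.zero_mulVec, Matrix.one_mulVec, Matrix.neg_mulVec, Pi.add_apply,
    Pi.neg_apply, zero_add, add_zero, norm_neg]
  exact add_comm _ _

end
noncomputable section
variable {n : Type*} [Fintype n]

lemma exists_toEuc :
    ∃ L : (n → ℂ) →L[ℂ] EuclideanSpace ℂ n, ∀ v, nrm v = ‖L v‖ := by
  refine ⟨((PiLp.continuousLinearEquiv 2 ℂ (fun _ : n => ℂ)).symm :
    (n → ℂ) →L[ℂ] EuclideanSpace ℂ n), fun v => ?_⟩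
  rw [nrm]
  simp

lemma intervalIntegrable_nrm_comp {f : ℝ → (n → ℂ)} {y t : ℝ}
    (hf : IntervalIntegrable f volume y t) :
    IntervalIntegrable (fun s => nrm (f s)) volume y t := by
  obtain ⟨L, hL⟩ := exists_toEuc (n := n)
  simp only [hL]
  exact ⟨(L.integrable_comp hf.1).norm, (L.integrable_comp hf.2).norm⟩

lemma nrm_integral_le {f : ℝ → (n → ℂ)} {y t : ℝ} (hyt : y ≤ t)
    (hf : IntervalIntegrable f volume y t) :
    nrm (∫ s in y..t, f s) ≤ ∫ s in y..t, nrm (f s) := by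
  obtain ⟨L, hL⟩ := exists_toEuc (n := n)
  rw [hL, ← ContinuousLinearMap.intervalIntegral_comp_comm _ hf]
  calc ‖∫ s in y..t, L (f s)‖ ≤ ∫ s in y..t, ‖L (f s)‖ :=
        intervalIntegral.norm_integral_le_integral_norm hyt
    _ = ∫ s in y..t, nrm (f s) := by simp only [hL]

lemma continuous_nrm_comp {f : ℝ → (n → ℂ)} (hf : Continuous f) :
    Continuous (fun t => nrm (f t)) := by
  obtain ⟨L, hL⟩ := exists_toEuc (n := n)
  simp only [hL]
  exact (L.continuous.comp hf).norm

end

/-- if `ψ₁, ψ₂` solve `Jψᵢ' + Vᵢψᵢ = 0` and agree at `y`, then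
`|ψ₁(x) - ψ₂(x)| ≤ |ψ₂(y)| exp(∫(‖V₁‖+‖V₂‖)) ∫‖V₁ - V₂‖` (integrals on `[min(x,y), max(x,y)]`).
The solutions are encoded as absolutely continuous functions with a.e. derivatives. -/
theorem stmt10 (N : ℕ) (hN : 1 ≤ N)
    (V₁ V₂ : ℝ → Matrix (Fin N ⊕ Fin N) (Fin N ⊕ Fin N) ℂ)
    (ψ₁ ψ₁' ψ₂ ψ₂' : ℝ → (Fin N ⊕ Fin N) → ℂ)
    (hV₁int : ∀ a b : ℝ, IntervalIntegrable (fun t => opNorm (V₁ t)) volume a b)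
    (hV₂int : ∀ a b : ℝ, IntervalIntegrable (fun t => opNorm (V₂ t)) volume a b)
    (hVdiffint : ∀ a b : ℝ, IntervalIntegrable (fun t => opNorm (V₁ t - V₂ t)) volume a b)
    (hψ₁'int : ∀ a b : ℝ, IntervalIntegrable ψ₁' volume a b)
    (hψ₂'int : ∀ a b : ℝ, IntervalIntegrable ψ₂' volume a b)
    (hAC₁ : ∀ a b : ℝ, ψ₁ b - ψ₁ a = ∫ t in a..b, ψ₁' t)
    (hAC₂ : ∀ a b : ℝ, ψ₂ b - ψ₂ a = ∫ t in a..b, ψ₂' t)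
    (hEq₁ : ∀ᵐ t ∂volume, (Jc N).mulVec (ψ₁' t) + (V₁ t).mulVec (ψ₁ t) = 0)
    (hEq₂ : ∀ᵐ t ∂volume, (Jc N).mulVec (ψ₂' t) + (V₂ t).mulVec (ψ₂ t) = 0)
    (y : ℝ) (hy : ψ₁ y = ψ₂ y) (x : ℝ) :
    Real.sqrt (∑ i, ‖ψ₁ x i - ψ₂ x i‖ ^ 2) ≤
      Real.sqrt (∑ i, ‖ψ₂ y i‖ ^ 2) *
        Real.exp (∫ t in min x y..max x y, opNorm (V₁ t) + opNorm (V₂ t)) *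
        ∫ s in min x y..max x y, opNorm (V₁ s - V₂ s) := by
  set a₁ : ℝ → ℝ := fun t => opNorm (V₁ t) with ha₁_def
  set a₂ : ℝ → ℝ := fun t => opNorm (V₂ t) with ha₂_def
  set d : ℝ → ℝ := fun t => opNorm (V₁ t - V₂ t) with hd_def
  have ha₁ : ∀ t, 0 ≤ a₁ t := fun t => opNorm_nonneg _
  have ha₂ : ∀ t, 0 ≤ a₂ t := fun t => opNorm_nonneg _
  have hd : ∀ t, 0 ≤ d t := fun t => opNorm_nonneg _
  -- continuity of the solutions
  have hψ₁cont : Continuous ψ₁ := by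
    have h : ψ₁ = fun t => ψ₁ 0 + ∫ s in (0:ℝ)..t, ψ₁' s := by
      funext t
      exact sub_eq_iff_eq_add'.mp (hAC₁ 0 t)
    rw [h]
    exact continuous_const.add (intervalIntegral.continuous_primitive hψ₁'int 0)
  have hψ₂cont : Continuous ψ₂ := by
    have h : ψ₂ = fun t => ψ₂ 0 + ∫ s in (0:ℝ)..t, ψ₂' s := by
      funext t
      exact sub_eq_iff_eq_add'.mp (hAC₂ 0 t)
    rw [h]
    exact continuous_const.add (intervalIntegral.continuous_primitive hψ₂'int 0)
  set Φ : ℝ → (Fin N ⊕ Fin N) → ℂ := fun t => ψ₁ t - ψ₂ t with hΦ_def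
  have hΦcont : Continuous Φ := hψ₁cont.sub hψ₂cont
  set U : ℝ → ℝ := fun t => nrm (Φ t) with hU_def
  set W : ℝ → ℝ := fun t => nrm (ψ₂ t) with hW_def
  have hUcont : Continuous U := continuous_nrm_comp hΦcont
  have hWcont : Continuous W := continuous_nrm_comp hψ₂cont
  have hΦy : Φ y = 0 := by rw [hΦ_def]; simp [hy]
  -- pointwise a.e. estimates
  have hae2 : ∀ᵐ s ∂volume, nrm (ψ₂' s) ≤ a₂ s * W s := by
    filter_upwards [hEq₂] with s hs
    have h1 : (Jc N).mulVec (ψ₂' s) = -(V₂ s).mulVec (ψ₂ s) :=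
      eq_neg_of_add_eq_zero_left hs
    calc nrm (ψ₂' s) = nrm ((Jc N).mulVec (ψ₂' s)) := (nrm_J N _).symm
      _ = nrm ((V₂ s).mulVec (ψ₂ s)) := by rw [h1, nrm_neg]
      _ ≤ a₂ s * W s := nrm_mulVec_le _ _
  have haeΦ : ∀ᵐ s ∂volume, nrm (ψ₁' s - ψ₂' s) ≤ a₁ s * U s + d s * W s := by
    filter_upwards [hEq₁, hEq₂] with s h1 h2
    have l1 : (Jc N).mulVec (ψ₁' s) = -(V₁ s).mulVec (ψ₁ s) :=
      eq_neg_of_add_eq_zero_left h1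
    have l2 : (Jc N).mulVec (ψ₂' s) = -(V₂ s).mulVec (ψ₂ s) :=
      eq_neg_of_add_eq_zero_left h2
    have e1 : (Jc N).mulVec (ψ₁' s - ψ₂' s)
        = -((V₁ s).mulVec (Φ s) + (V₁ s - V₂ s).mulVec (ψ₂ s)) := by
      rw [Matrix.mulVec_sub, l1, l2, hΦ_def]
      simp only [Matrix.mulVec_sub, Matrix.sub_mulVec]
      abel
    calc nrm (ψ₁' s - ψ₂' s) = nrm ((Jc N).mulVec (ψ₁' s - ψ₂' s)) := (nrm_J N _).symm
      _ = nrm ((V₁ s).mulVec (Φ s) + (V₁ s - V₂ s).mulVec (ψ₂ s)) := by rw [e1, nrm_neg]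
      _ ≤ nrm ((V₁ s).mulVec (Φ s)) + nrm ((V₁ s - V₂ s).mulVec (ψ₂ s)) := nrm_add_le _ _
      _ ≤ a₁ s * U s + d s * W s :=
          add_le_add (nrm_mulVec_le _ _) (nrm_mulVec_le _ _)
  have hgoalL : Real.sqrt (∑ i, ‖ψ₁ x i - ψ₂ x i‖ ^ 2) = U x := by
    show _ = nrm (ψ₁ x - ψ₂ x)
    rw [nrm_eq_sqrt]
    simp
  have hgoalR : Real.sqrt (∑ i, ‖ψ₂ y i‖ ^ 2) = W y := by
    show _ = nrm (ψ₂ y)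
    rw [nrm_eq_sqrt]
  rw [hgoalL, hgoalR]
  rcases le_total y x with hyx | hxy
  · -- forward case
    rw [min_eq_right hyx, max_eq_left hyx]
    have hW1 : ∀ t ∈ Icc y x, W t ≤ W y + ∫ s in y..t, a₂ s * W s := by
      intro t ht
      have h2 : ψ₂ t = ψ₂ y + ∫ s in y..t, ψ₂' s := sub_eq_iff_eq_add'.mp (hAC₂ y t)
      calc W t = nrm (ψ₂ y + ∫ s in y..t, ψ₂' s) := by rw [hW_def]; simp only; rw [h2]
        _ ≤ nrm (ψ₂ y) + nrm (∫ s in y..t, ψ₂' s) := nrm_add_le _ _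
        _ ≤ W y + ∫ s in y..t, nrm (ψ₂' s) :=
            add_le_add le_rfl (nrm_integral_le ht.1 (hψ₂'int y t))
        _ ≤ W y + ∫ s in y..t, a₂ s * W s := by
            refine add_le_add le_rfl (intervalIntegral.integral_mono_ae ht.1
              (intervalIntegrable_nrm_comp (hψ₂'int y t))
              ((hV₂int y t).mul_continuousOn hWcont.continuousOn) hae2)
    have hWbound : ∀ t ∈ Icc y x, W t ≤ W y * Real.exp (∫ s in y..x, a₂ s) := by
      intro t ht
      have h1 := gronwall_fwd ht.1 ha₂ hV₂int hWcont.continuousOn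
        (fun r hr => hW1 r ⟨hr.1, hr.2.trans ht.2⟩)
      refine h1.trans (mul_le_mul_of_nonneg_left (Real.exp_le_exp.mpr ?_) (nrm_nonneg _))
      exact intervalIntegral.integral_mono_interval le_rfl ht.1 ht.2
        (Filter.Eventually.of_forall (fun s => ha₂ s)) (hV₂int y x)
    set C₂ : ℝ := W y * Real.exp (∫ s in y..x, a₂ s) with hC₂_def
    have hC₂nonneg : 0 ≤ C₂ := mul_nonneg (nrm_nonneg _) (Real.exp_pos _).le
    set D : ℝ := C₂ * ∫ s in y..x, d s with hD_def
    have hU1 : ∀ t ∈ Icc y x, U t ≤ D + ∫ s in y..t, a₁ s * U s := by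
      intro t ht
      have hsub : Φ t = ∫ s in y..t, (ψ₁' s - ψ₂' s) := by
        rw [intervalIntegral.integral_sub (hψ₁'int y t) (hψ₂'int y t),
          ← hAC₁ y t, ← hAC₂ y t, hΦ_def]
        simp only
        rw [hy]
        abel
      have int1 : IntervalIntegrable (fun s => a₁ s * U s) volume y t :=
        (hV₁int y t).mul_continuousOn hUcont.continuousOn
      have int2 : IntervalIntegrable (fun s => d s * W s) volume y t :=
        (hVdiffint y t).mul_continuousOn hWcont.continuousOn
      have int2' : IntervalIntegrable (fun s => d s * C₂) volume y t :=
        (hVdiffint y t).mul_continuousOn continuousOn_const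
      have step1 : U t ≤ (∫ s in y..t, a₁ s * U s) + ∫ s in y..t, d s * W s := by
        calc U t = nrm (∫ s in y..t, (ψ₁' s - ψ₂' s)) := by
              rw [hU_def]; simp only; rw [hsub]
          _ ≤ ∫ s in y..t, nrm (ψ₁' s - ψ₂' s) :=
              nrm_integral_le ht.1 ((hψ₁'int y t).sub (hψ₂'int y t))
          _ ≤ ∫ s in y..t, (a₁ s * U s + d s * W s) :=
              intervalIntegral.integral_mono_ae ht.1
                (intervalIntegrable_nrm_comp ((hψ₁'int y t).sub (hψ₂'int y t)))
                (int1.add int2) haeΦ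
          _ = (∫ s in y..t, a₁ s * U s) + ∫ s in y..t, d s * W s :=
              intervalIntegral.integral_add int1 int2
      have step2 : (∫ s in y..t, d s * W s) ≤ D := by
        calc (∫ s in y..t, d s * W s) ≤ ∫ s in y..t, d s * C₂ := by
              refine intervalIntegral.integral_mono_on ht.1 int2 int2' (fun s hs => ?_)
              exact mul_le_mul_of_nonneg_left (hWbound s ⟨hs.1, hs.2.trans ht.2⟩) (hd s)
          _ ≤ ∫ s in y..x, d s * C₂ := by
              refine intervalIntegral.integral_mono_interval le_rfl ht.1 ht.2
                (Filter.Eventually.of_forall (fun s => mul_nonneg (hd s) hC₂nonneg))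
                ((hVdiffint y x).mul_continuousOn continuousOn_const)
          _ = D := by rw [hD_def, intervalIntegral.integral_mul_const]; ring
      linarith [step1, step2]
    have hfinal := gronwall_fwd hyx ha₁ hV₁int hUcont.continuousOn hU1
    calc U x ≤ D * Real.exp (∫ s in y..x, a₁ s) := hfinal
      _ = W y * Real.exp (∫ t in y..x, (a₁ t + a₂ t)) * ∫ s in y..x, d s := by
          rw [intervalIntegral.integral_add (hV₁int y x) (hV₂int y x), Real.exp_add,
            hD_def, hC₂_def]
          ring
  · -- backward case
    rw [min_eq_left hxy, max_eq_right hxy]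
    have hW1 : ∀ t ∈ Icc x y, W t ≤ W y + ∫ s in t..y, a₂ s * W s := by
      intro t ht
      have h2 : ψ₂ t = ψ₂ y - ∫ s in t..y, ψ₂' s := by
        rw [← hAC₂ t y]; abel
      calc W t = nrm (ψ₂ y - ∫ s in t..y, ψ₂' s) := by rw [hW_def]; simp only; rw [h2]
        _ ≤ nrm (ψ₂ y) + nrm (∫ s in t..y, ψ₂' s) := by
            rw [sub_eq_add_neg]
            exact (nrm_add_le _ _).trans (by rw [nrm_neg])
        _ ≤ W y + ∫ s in t..y, nrm (ψ₂' s) :=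
            add_le_add le_rfl (nrm_integral_le ht.2 (hψ₂'int t y))
        _ ≤ W y + ∫ s in t..y, a₂ s * W s := by
            refine add_le_add le_rfl (intervalIntegral.integral_mono_ae ht.2
              (intervalIntegrable_nrm_comp (hψ₂'int t y))
              ((hV₂int t y).mul_continuousOn hWcont.continuousOn) hae2)
    have hWbound : ∀ t ∈ Icc x y, W t ≤ W y * Real.exp (∫ s in x..y, a₂ s) := by
      intro t ht
      have h1 := gronwall_bwd ht.2 ha₂ hV₂int hWcont.continuousOn
        (fun r hr => hW1 r ⟨ht.1.trans hr.1, hr.2⟩)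
      refine h1.trans (mul_le_mul_of_nonneg_left (Real.exp_le_exp.mpr ?_) (nrm_nonneg _))
      exact intervalIntegral.integral_mono_interval ht.1 ht.2 le_rfl
        (Filter.Eventually.of_forall (fun s => ha₂ s)) (hV₂int x y)
    set C₂ : ℝ := W y * Real.exp (∫ s in x..y, a₂ s) with hC₂_def
    have hC₂nonneg : 0 ≤ C₂ := mul_nonneg (nrm_nonneg _) (Real.exp_pos _).le
    set D : ℝ := C₂ * ∫ s in x..y, d s with hD_def
    have hU1 : ∀ t ∈ Icc x y, U t ≤ D + ∫ s in t..y, a₁ s * U s := by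
      intro t ht
      have hsub : Φ t = -∫ s in t..y, (ψ₁' s - ψ₂' s) := by
        rw [intervalIntegral.integral_sub (hψ₁'int t y) (hψ₂'int t y),
          ← hAC₁ t y, ← hAC₂ t y, hΦ_def]
        simp only
        rw [hy]
        abel
      have int1 : IntervalIntegrable (fun s => a₁ s * U s) volume t y :=
        (hV₁int t y).mul_continuousOn hUcont.continuousOn
      have int2 : IntervalIntegrable (fun s => d s * W s) volume t y :=
        (hVdiffint t y).mul_continuousOn hWcont.continuousOn
      have int2' : IntervalIntegrable (fun s => d s * C₂) volume t y :=
        (hVdiffint t y).mul_continuousOn continuousOn_const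
      have step1 : U t ≤ (∫ s in t..y, a₁ s * U s) + ∫ s in t..y, d s * W s := by
        calc U t = nrm (∫ s in t..y, (ψ₁' s - ψ₂' s)) := by
              rw [hU_def]; simp only; rw [hsub, nrm_neg]
          _ ≤ ∫ s in t..y, nrm (ψ₁' s - ψ₂' s) :=
              nrm_integral_le ht.2 ((hψ₁'int t y).sub (hψ₂'int t y))
          _ ≤ ∫ s in t..y, (a₁ s * U s + d s * W s) :=
              intervalIntegral.integral_mono_ae ht.2
                (intervalIntegrable_nrm_comp ((hψ₁'int t y).sub (hψ₂'int t y)))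
                (int1.add int2) haeΦ
          _ = (∫ s in t..y, a₁ s * U s) + ∫ s in t..y, d s * W s :=
              intervalIntegral.integral_add int1 int2
      have step2 : (∫ s in t..y, d s * W s) ≤ D := by
        calc (∫ s in t..y, d s * W s) ≤ ∫ s in t..y, d s * C₂ := by
              refine intervalIntegral.integral_mono_on ht.2 int2 int2' (fun s hs => ?_)
              exact mul_le_mul_of_nonneg_left (hWbound s ⟨ht.1.trans hs.1, hs.2⟩) (hd s)
          _ ≤ ∫ s in x..y, d s * C₂ := by
              refine intervalIntegral.integral_mono_interval ht.1 ht.2 le_rfl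
                (Filter.Eventually.of_forall (fun s => mul_nonneg (hd s) hC₂nonneg))
                ((hVdiffint x y).mul_continuousOn continuousOn_const)
          _ = D := by rw [hD_def, intervalIntegral.integral_mul_const]; ring
      linarith [step1, step2]
    have hfinal := gronwall_bwd hxy ha₁ hV₁int hUcont.continuousOn hU1
    calc U x ≤ D * Real.exp (∫ s in x..y, a₁ s) := hfinal
      _ = W y * Real.exp (∫ t in x..y, (a₁ t + a₂ t)) * ∫ s in x..y, d s := by
          rw [intervalIntegral.integral_add (hV₁int x y) (hV₂int x y), Real.exp_add,
            hD_def, hC₂_def]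
          ring
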